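/- Let a > 0, let H : [a,∞) → ℝ be non-decreasing, bounded and non-negative, and let G₁, G₂ : [a,∞) → ℝ be continuous functions of bounded variation on [a,∞) with lim_{x→∞} G₁(x) = lim_{x→∞} G₂(x) = 0. Then the improper Riemann–Stieltjes integrals ∫_a^∞ H(x) d[−G₁(x)] and ∫_a^∞ H(x) d[−G₂(x)] exist, and if G₁(x) ≤ G₂(x) for all x ≥ a, then ∫_a^∞ H(x) d[−G₁(x)] ≤ ∫_a^∞ H(x) d[−G₂(x)]. -/

import Mathlib

open Set Filter

noncomputable section

/-- The Riemann–Stieltjes sum of `f` with respect to `g` for the tagged partition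
given by points `t 0, t 1, ..., t n` with tags `ξ 0, ..., ξ (n-1)`. -/
def rsSum (f g : ℝ → ℝ) (n : ℕ) (t ξ : ℕ → ℝ) : ℝ :=
  ∑ i ∈ Finset.range n, f (ξ i) * (g (t (i + 1)) - g (t i))

/-- `IsRSIntegral f g a b I` says that the Riemann–Stieltjes integral
`∫_a^b f(x) dg(x)` exists and equals `I`: for every `ε > 0` there is `δ > 0` such
that every tagged partition of `[a, b]` of mesh `< δ` has Riemann–Stieltjes sum
within `ε` of `I`. -/
def IsRSIntegral (f g : ℝ → ℝ) (a b I : ℝ) : Prop :=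
  ∀ ε > 0, ∃ δ > 0, ∀ (n : ℕ) (t ξ : ℕ → ℝ),
    t 0 = a → t n = b →
    (∀ i < n, t i ≤ t (i + 1)) →
    (∀ i < n, ξ i ∈ Set.Icc (t i) (t (i + 1))) →
    (∀ i < n, t (i + 1) - t i < δ) →
    |rsSum f g n t ξ - I| < ε

/-- `IsImproperRSIntegral f g a I` says that the improper Riemann–Stieltjes integral
`∫_a^∞ f(x) dg(x) = lim_{b→∞} ∫_a^b f(x) dg(x)` exists and equals `I`. -/
def IsImproperRSIntegral (f g : ℝ → ℝ) (a I : ℝ) : Prop :=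
  ∃ F : ℝ → ℝ, (∀ b, a < b → IsRSIntegral f g a b (F b)) ∧
    Filter.Tendsto F Filter.atTop (nhds I)

namespace RSAux



open Finset

/-- A partition of `[a,b]` with points `t 0 ≤ ... ≤ t n`. -/
def IsPart (a b : ℝ) (n : ℕ) (t : ℕ → ℝ) : Prop :=
  t 0 = a ∧ t n = b ∧ ∀ i < n, t i ≤ t (i + 1)

theorem IsPart.steps_mono {a b : ℝ} {n : ℕ} {t : ℕ → ℝ} (h : IsPart a b n t)
    {i j : ℕ} (hij : i ≤ j) (hj : j ≤ n) : t i ≤ t j := by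
  induction j with
  | zero => simp [Nat.le_zero.mp hij]
  | succ k ih =>
    rcases Nat.lt_or_ge i (k + 1) with h1 | h2
    · exact le_trans (ih (Nat.lt_succ_iff.mp h1) (le_trans (Nat.le_succ k) hj))
        (h.2.2 k (Nat.lt_of_succ_le hj))
    · have : i = k + 1 := le_antisymm hij h2
      simp [this]

theorem IsPart.left_le {a b : ℝ} {n : ℕ} {t : ℕ → ℝ} (h : IsPart a b n t)
    {i : ℕ} (hi : i ≤ n) : a ≤ t i := h.1 ▸ h.steps_mono (Nat.zero_le i) hi

theorem IsPart.le_right {a b : ℝ} {n : ℕ} {t : ℕ → ℝ} (h : IsPart a b n t)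
    {i : ℕ} (hi : i ≤ n) : t i ≤ b := h.2.1 ▸ h.steps_mono hi le_rfl

theorem IsPart.le {a b : ℝ} {n : ℕ} {t : ℕ → ℝ} (h : IsPart a b n t) : a ≤ b := by
  have := h.left_le (le_refl n); rw [h.2.1] at this; exact this

/-- Lower Darboux–Stieltjes sum of integrand `g` against integrator `H`. -/
def lowSum (g H : ℝ → ℝ) (n : ℕ) (t : ℕ → ℝ) : ℝ :=
  ∑ i ∈ Finset.range n, sInf (g '' Set.Icc (t i) (t (i + 1))) * (H (t (i + 1)) - H (t i))

/-- Upper Darboux–Stieltjes sum. -/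
def upSum (g H : ℝ → ℝ) (n : ℕ) (t : ℕ → ℝ) : ℝ :=
  ∑ i ∈ Finset.range n, sSup (g '' Set.Icc (t i) (t (i + 1))) * (H (t (i + 1)) - H (t i))

theorem clamp_telescope (H : ℝ → ℝ) {u v : ℝ} (huv : u ≤ v) {m : ℕ} {s : ℕ → ℝ}
    (h0 : s 0 ≤ u) (hm : v ≤ s m) :
    ∑ j ∈ Finset.range m, (H (min v (max u (s (j + 1)))) - H (min v (max u (s j))))
      = H v - H u := by
  rw [Finset.sum_range_sub (fun j => H (min v (max u (s j))))]
  have h1 : min v (max u (s m)) = v := min_eq_left (le_trans hm (le_max_right _ _))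
  have h2 : min v (max u (s 0)) = u := by rw [max_eq_left h0, min_eq_right huv]
  rw [h1, h2]

theorem clamp_sub_eq (H : ℝ → ℝ) {u v p q : ℝ} (huv : u ≤ v) (hpq : p ≤ q) :
    H (min v (max u q)) - H (min v (max u p)) = H (min q (max p v)) - H (min q (max p u)) := by
  rcases le_or_gt q u with h | h
  · rw [max_eq_left h, max_eq_left (le_trans hpq h), sub_self,
      max_eq_right (le_trans hpq (le_trans h huv)), min_eq_left (le_trans h huv),
      max_eq_right (le_trans hpq h), min_eq_left h, sub_self]
  · rcases le_or_gt p v with h' | h'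
    · have e1 : max p v = v := max_eq_right h'
      have e2 : min v (max u p) = max u p := min_eq_right (max_le huv h')
      have e3 : min q (max p u) = max p u := min_eq_right (max_le hpq h.le)
      rw [max_eq_right h.le, e1, e2, e3, max_comm u p, min_comm v q]
    · have e1 : min v (max u q) = v := min_eq_left (le_max_of_le_right (le_trans h'.le hpq))
      have e2 : min v (max u p) = v := min_eq_left (le_max_of_le_right h'.le)
      have e3 : max p v = p := max_eq_left h'.le
      have e4 : max p u = p := max_eq_left (le_trans huv h'.le)
      rw [e1, e2, e3, e4, min_eq_right hpq, sub_self, sub_self]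

section Darboux

variable {g H : ℝ → ℝ} {a b : ℝ}

/-- If `H (min v (max u q)) ≠ H (min v (max u p))` then the intervals
`[u,v]` and `[p,q]` genuinely overlap, at `max u p`. -/
theorem overlap_of_ne {u v p q : ℝ} (huv : u ≤ v) (hpq : p ≤ q)
    (hne : H (min v (max u q)) ≠ H (min v (max u p))) :
    max u p ∈ Set.Icc u v ∩ Set.Icc p q := by
  have hu : u ≤ q := by
    by_contra hc
    push_neg at hc
    rw [max_eq_left hc.le, max_eq_left (le_trans hpq hc.le)] at hne
    exact hne rfl
  have hp : p ≤ v := by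
    by_contra hc
    push_neg at hc
    rw [min_eq_left (le_max_of_le_right (le_trans hc.le hpq)),
      min_eq_left (le_max_of_le_right hc.le)] at hne
    exact hne rfl
  exact ⟨⟨le_max_left _ _, max_le huv hp⟩, ⟨le_max_right _ _, max_le hu hpq⟩⟩

theorem lowSum_le_upSum (hH : MonotoneOn H (Set.Icc a b))
    (hgA : BddAbove (g '' Set.Icc a b)) (hgB : BddBelow (g '' Set.Icc a b))
    {n m : ℕ} {t s : ℕ → ℝ} (hP : IsPart a b n t) (hQ : IsPart a b m s) :
    lowSum g H n t ≤ upSum g H m s := by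
  set Δ : ℕ → ℕ → ℝ := fun i j =>
    H (min (t (i + 1)) (max (t i) (s (j + 1)))) - H (min (t (i + 1)) (max (t i) (s j))) with hΔ
  have hsubP : ∀ i < n, Set.Icc (t i) (t (i + 1)) ⊆ Set.Icc a b := fun i hi =>
    Set.Icc_subset_Icc (hP.left_le hi.le) (hP.le_right hi)
  have hsubQ : ∀ j < m, Set.Icc (s j) (s (j + 1)) ⊆ Set.Icc a b := fun j hj =>
    Set.Icc_subset_Icc (hQ.left_le hj.le) (hQ.le_right hj)
  have hclampmem : ∀ i < n, ∀ x, min (t (i + 1)) (max (t i) x) ∈ Set.Icc a b := by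
    intro i hi x
    constructor
    · exact le_min (hP.left_le hi) (le_trans (hP.left_le hi.le) (le_max_left _ _))
    · exact le_trans (min_le_left _ _) (hP.le_right hi)
  have hΔnonneg : ∀ i < n, ∀ j < m, 0 ≤ Δ i j := by
    intro i hi j hj
    have h1 : min (t (i + 1)) (max (t i) (s j)) ≤ min (t (i + 1)) (max (t i) (s (j + 1))) :=
      min_le_min le_rfl (max_le_max le_rfl (hQ.2.2 j hj))
    exact sub_nonneg.mpr (hH (hclampmem i hi _) (hclampmem i hi _) h1)
  have step1 : lowSum g H n t
      = ∑ i ∈ Finset.range n, ∑ j ∈ Finset.range m,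
          sInf (g '' Set.Icc (t i) (t (i + 1))) * Δ i j := by
    refine Finset.sum_congr rfl fun i hi => ?_
    rw [Finset.mem_range] at hi
    rw [← Finset.mul_sum]
    congr 1
    rw [clamp_telescope H (hP.2.2 i hi) (hQ.1 ▸ hP.left_le hi.le) (hQ.2.1 ▸ hP.le_right hi)]
  have step3 : ∑ j ∈ Finset.range m, ∑ i ∈ Finset.range n,
      sSup (g '' Set.Icc (s j) (s (j + 1))) * Δ i j = upSum g H m s := by
    refine Finset.sum_congr rfl fun j hj => ?_
    rw [Finset.mem_range] at hj
    rw [← Finset.mul_sum]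
    congr 1
    have : ∀ i ∈ Finset.range n, Δ i j
        = H (min (s (j + 1)) (max (s j) (t (i + 1)))) - H (min (s (j + 1)) (max (s j) (t i))) := by
      intro i hi
      rw [Finset.mem_range] at hi
      exact clamp_sub_eq H (hP.2.2 i hi) (hQ.2.2 j hj)
    rw [Finset.sum_congr rfl this,
      clamp_telescope H (hQ.2.2 j hj) (hP.1 ▸ hQ.left_le hj.le) (hP.2.1 ▸ hQ.le_right hj)]
  refine le_trans (le_of_eq step1) (le_trans ?_ (le_of_eq step3))
  rw [Finset.sum_comm]
  refine Finset.sum_le_sum fun j hj => Finset.sum_le_sum fun i hi => ?_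
  rw [Finset.mem_range] at hi hj
  rcases eq_or_ne (Δ i j) 0 with h0 | h0
  · rw [h0, mul_zero, mul_zero]
  · have hne : H (min (t (i + 1)) (max (t i) (s (j + 1))))
        ≠ H (min (t (i + 1)) (max (t i) (s j))) := sub_ne_zero.mp h0
    obtain ⟨hz1, hz2⟩ := overlap_of_ne (H := H) (hP.2.2 i hi) (hQ.2.2 j hj) hne
    have h1 : sInf (g '' Set.Icc (t i) (t (i + 1))) ≤ g (max (t i) (s j)) :=
      csInf_le (hgB.mono (Set.image_mono (f := g) (hsubP i hi))) (Set.mem_image_of_mem g hz1)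
    have h2 : g (max (t i) (s j)) ≤ sSup (g '' Set.Icc (s j) (s (j + 1))) :=
      le_csSup (hgA.mono (Set.image_mono (f := g) (hsubQ j hj))) (Set.mem_image_of_mem g hz2)
    exact mul_le_mul_of_nonneg_right (le_trans h1 h2) (hΔnonneg i hi j hj)

end Darboux
section JDef

variable {g H : ℝ → ℝ} {a b : ℝ}

def dLow (g H : ℝ → ℝ) (a b : ℝ) : Set ℝ :=
  {L | ∃ n t, IsPart a b n t ∧ L = lowSum g H n t}

def J (g H : ℝ → ℝ) (a b : ℝ) : ℝ := sSup (dLow g H a b)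

def trivPart (a b : ℝ) : ℕ → ℝ := fun i => if i = 0 then a else b

theorem trivPart_isPart (hab : a ≤ b) : IsPart a b 1 (trivPart a b) := by
  refine ⟨if_pos rfl, if_neg one_ne_zero, fun i hi => ?_⟩
  interval_cases i
  simpa [trivPart] using hab

theorem dLow_nonempty (hab : a ≤ b) : (dLow g H a b).Nonempty :=
  ⟨_, 1, trivPart a b, trivPart_isPart hab, rfl⟩

theorem dLow_bddAbove (hab : a ≤ b) (hH : MonotoneOn H (Set.Icc a b))
    (hgA : BddAbove (g '' Set.Icc a b)) (hgB : BddBelow (g '' Set.Icc a b)) :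
    BddAbove (dLow g H a b) := by
  refine ⟨upSum g H 1 (trivPart a b), fun L hL => ?_⟩
  obtain ⟨n, t, hP, rfl⟩ := hL
  exact lowSum_le_upSum hH hgA hgB hP (trivPart_isPart hab)

theorem lowSum_le_J (hab : a ≤ b) (hH : MonotoneOn H (Set.Icc a b))
    (hgA : BddAbove (g '' Set.Icc a b)) (hgB : BddBelow (g '' Set.Icc a b))
    {n : ℕ} {t : ℕ → ℝ} (hP : IsPart a b n t) :
    lowSum g H n t ≤ J g H a b :=
  le_csSup (dLow_bddAbove hab hH hgA hgB) ⟨n, t, hP, rfl⟩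

theorem J_le_upSum (hab : a ≤ b) (hH : MonotoneOn H (Set.Icc a b))
    (hgA : BddAbove (g '' Set.Icc a b)) (hgB : BddBelow (g '' Set.Icc a b))
    {n : ℕ} {t : ℕ → ℝ} (hP : IsPart a b n t) :
    J g H a b ≤ upSum g H n t := by
  refine csSup_le (dLow_nonempty hab) fun L hL => ?_
  obtain ⟨m, s, hQ, rfl⟩ := hL
  exact lowSum_le_upSum hH hgA hgB hQ hP

theorem lowSum_le_tagged (hH : MonotoneOn H (Set.Icc a b))
    (hgB : BddBelow (g '' Set.Icc a b))
    {n : ℕ} {t τ : ℕ → ℝ} (hP : IsPart a b n t)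
    (hτ : ∀ i < n, τ i ∈ Set.Icc (t i) (t (i + 1))) :
    lowSum g H n t ≤ ∑ i ∈ Finset.range n, g (τ i) * (H (t (i + 1)) - H (t i)) := by
  refine Finset.sum_le_sum fun i hi => ?_
  rw [Finset.mem_range] at hi
  have hsub : Set.Icc (t i) (t (i + 1)) ⊆ Set.Icc a b :=
    Set.Icc_subset_Icc (hP.left_le hi.le) (hP.le_right hi)
  have h1 : sInf (g '' Set.Icc (t i) (t (i + 1))) ≤ g (τ i) :=
    csInf_le (hgB.mono (Set.image_mono (f := g) hsub)) (Set.mem_image_of_mem g (hτ i hi))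
  have h2 : 0 ≤ H (t (i + 1)) - H (t i) :=
    sub_nonneg.mpr (hH (hsub (Set.left_mem_Icc.mpr (hP.2.2 i hi)))
      (hsub (Set.right_mem_Icc.mpr (hP.2.2 i hi))) (hP.2.2 i hi))
  exact mul_le_mul_of_nonneg_right h1 h2

theorem tagged_le_upSum (hH : MonotoneOn H (Set.Icc a b))
    (hgA : BddAbove (g '' Set.Icc a b))
    {n : ℕ} {t τ : ℕ → ℝ} (hP : IsPart a b n t)
    (hτ : ∀ i < n, τ i ∈ Set.Icc (t i) (t (i + 1))) :
    ∑ i ∈ Finset.range n, g (τ i) * (H (t (i + 1)) - H (t i)) ≤ upSum g H n t := by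
  refine Finset.sum_le_sum fun i hi => ?_
  rw [Finset.mem_range] at hi
  have hsub : Set.Icc (t i) (t (i + 1)) ⊆ Set.Icc a b :=
    Set.Icc_subset_Icc (hP.left_le hi.le) (hP.le_right hi)
  have h1 : g (τ i) ≤ sSup (g '' Set.Icc (t i) (t (i + 1))) :=
    le_csSup (hgA.mono (Set.image_mono (f := g) hsub)) (Set.mem_image_of_mem g (hτ i hi))
  have h2 : 0 ≤ H (t (i + 1)) - H (t i) :=
    sub_nonneg.mpr (hH (hsub (Set.left_mem_Icc.mpr (hP.2.2 i hi)))
      (hsub (Set.right_mem_Icc.mpr (hP.2.2 i hi))) (hP.2.2 i hi))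
  exact mul_le_mul_of_nonneg_right h1 h2

theorem upSum_sub_lowSum_le {κ ω : ℝ} (hω : 0 ≤ ω)
    (hH : MonotoneOn H (Set.Icc a b))
    (hosc : ∀ x ∈ Set.Icc a b, ∀ y ∈ Set.Icc a b, |x - y| ≤ κ → |g x - g y| ≤ ω)
    {n : ℕ} {t : ℕ → ℝ} (hP : IsPart a b n t)
    (hmesh : ∀ i < n, t (i + 1) - t i ≤ κ) :
    upSum g H n t - lowSum g H n t ≤ ω * (H b - H a) := by
  have key : ∀ i < n, sSup (g '' Set.Icc (t i) (t (i + 1)))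
      - sInf (g '' Set.Icc (t i) (t (i + 1))) ≤ ω := by
    intro i hi
    have hne : (Set.Icc (t i) (t (i + 1))).Nonempty := Set.nonempty_Icc.mpr (hP.2.2 i hi)
    have hsub : Set.Icc (t i) (t (i + 1)) ⊆ Set.Icc a b :=
      Set.Icc_subset_Icc (hP.left_le hi.le) (hP.le_right hi)
    rw [sub_le_iff_le_add]
    refine csSup_le (hne.image g) ?_
    rintro y ⟨x, hx, rfl⟩
    rw [← sub_le_iff_le_add']
    refine le_csInf (hne.image g) ?_
    rintro y' ⟨x', hx', rfl⟩
    rw [sub_le_iff_le_add, ← sub_le_iff_le_add']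
    refine le_trans (le_abs_self _) (hosc x (hsub hx) x' (hsub hx') ?_)
    have h1 : |x - x'| ≤ t (i + 1) - t i := by
      rw [abs_sub_le_iff]
      constructor
      · linarith [hx.1, hx.2, hx'.1, hx'.2]
      · linarith [hx.1, hx.2, hx'.1, hx'.2]
    exact le_trans h1 (hmesh i hi)
  have hd : ∀ i < n, 0 ≤ H (t (i + 1)) - H (t i) := by
    intro i hi
    have hsub : Set.Icc (t i) (t (i + 1)) ⊆ Set.Icc a b :=
      Set.Icc_subset_Icc (hP.left_le hi.le) (hP.le_right hi)
    exact sub_nonneg.mpr (hH (hsub (Set.left_mem_Icc.mpr (hP.2.2 i hi)))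
      (hsub (Set.right_mem_Icc.mpr (hP.2.2 i hi))) (hP.2.2 i hi))
  rw [upSum, lowSum, ← Finset.sum_sub_distrib]
  have : ∀ i ∈ Finset.range n,
      sSup (g '' Set.Icc (t i) (t (i + 1))) * (H (t (i + 1)) - H (t i))
      - sInf (g '' Set.Icc (t i) (t (i + 1))) * (H (t (i + 1)) - H (t i))
      ≤ ω * (H (t (i + 1)) - H (t i)) := by
    intro i hi
    rw [Finset.mem_range] at hi
    rw [← sub_mul]
    exact mul_le_mul_of_nonneg_right (key i hi) (hd i hi)
  refine le_trans (Finset.sum_le_sum this) ?_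
  rw [← Finset.mul_sum, Finset.sum_range_sub (fun i => H (t i)), hP.1, hP.2.1]

end JDef
section Abel

variable {a b : ℝ}

/-- The extended partition made of `a`, the tags `ξ 0 ≤ ... ≤ ξ (n-1)`, and `b`. -/
def uext (a b : ℝ) (n : ℕ) (ξ : ℕ → ℝ) : ℕ → ℝ :=
  fun j => if j = 0 then a else if j ≤ n then ξ (j - 1) else b

/-- Abel summation: a Riemann–Stieltjes sum of `H` against `g` equals boundary terms
minus a Riemann–Stieltjes sum of `g` against `H` over the dual (tag) partition. -/
theorem abel_identity (H g : ℝ → ℝ) {n : ℕ} (hn : 1 ≤ n) (t ξ : ℕ → ℝ)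
    (h0 : t 0 = a) (hb : t n = b) :
    rsSum H g n t ξ = H b * g b - H a * g a -
      ∑ j ∈ Finset.range (n + 1),
        g (t (min j n)) * (H (uext a b n ξ (j + 1)) - H (uext a b n ξ j)) := by
  set ψ : ℕ → ℝ := fun j => H (uext a b n ξ j) * g (t (min j n)) with hψ
  have key : ∀ j ∈ Finset.range (n + 1),
      g (t (min j n)) * (H (uext a b n ξ (j + 1)) - H (uext a b n ξ j))
        + (if j < n then H (ξ j) * (g (t (j + 1)) - g (t j)) else 0)
      = ψ (j + 1) - ψ j := by
    intro j hj
    rw [Finset.mem_range, Nat.lt_succ_iff] at hj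
    rcases Nat.eq_zero_or_pos j with rfl | hj0
    · have e0 : uext a b n ξ 0 = a := if_pos rfl
      have e1 : uext a b n ξ 1 = ξ 0 := by
        rw [uext]; rw [if_neg one_ne_zero, if_pos hn]
      have e2 : (min 0 n) = 0 := Nat.zero_min n
      have e3 : (min 1 n) = 1 := min_eq_left hn
      have e4 : (0 : ℕ) < n := hn
      rw [hψ]
      simp only [e0, e1, e2, e3, if_pos e4]
      rw [h0]
      ring
    · rcases Nat.lt_or_ge j n with hjn | hjn
      · have e1 : uext a b n ξ j = ξ (j - 1) := by
          rw [uext]; rw [if_neg (Nat.pos_iff_ne_zero.mp hj0), if_pos hj]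
        have e2 : uext a b n ξ (j + 1) = ξ j := by
          rw [uext]; rw [if_neg (Nat.succ_ne_zero j), if_pos (by omega : j + 1 ≤ n)]
          congr 1
        have e3 : min j n = j := min_eq_left hj
        have e4 : min (j + 1) n = j + 1 := min_eq_left hjn
        rw [hψ]
        simp only [e1, e2, e3, e4, if_pos hjn]
        ring
      · have hjn' : j = n := le_antisymm hj hjn
        rw [hjn']
        have e1 : uext a b n ξ n = ξ (n - 1) := by
          rw [uext]; rw [if_neg (by omega : ¬ n = 0), if_pos le_rfl]
        have e2 : uext a b n ξ (n + 1) = b := by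
          rw [uext]; rw [if_neg (Nat.succ_ne_zero n), if_neg (Nat.not_succ_le_self n)]
        have e3 : min n n = n := min_self n
        have e4 : min (n + 1) n = n := min_eq_right (Nat.le_succ n)
        rw [hψ]
        simp only [e1, e2, e3, e4, if_neg (lt_irrefl n), hb]
        ring
  have hsum : ∑ j ∈ Finset.range (n + 1),
      (g (t (min j n)) * (H (uext a b n ξ (j + 1)) - H (uext a b n ξ j))
        + (if j < n then H (ξ j) * (g (t (j + 1)) - g (t j)) else 0))
      = ψ (n + 1) - ψ 0 := by
    rw [Finset.sum_congr rfl key, Finset.sum_range_sub ψ]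
  rw [Finset.sum_add_distrib] at hsum
  have hite : ∑ j ∈ Finset.range (n + 1),
      (if j < n then H (ξ j) * (g (t (j + 1)) - g (t j)) else 0) = rsSum H g n t ξ := by
    rw [Finset.sum_range_succ, if_neg (lt_irrefl n), add_zero, rsSum]
    refine Finset.sum_congr rfl fun j hj => ?_
    rw [Finset.mem_range] at hj
    rw [if_pos hj]
  rw [hite] at hsum
  have hψ1 : ψ (n + 1) = H b * g b := by
    rw [hψ]
    simp only [uext, if_neg (Nat.succ_ne_zero n), if_neg (Nat.not_succ_le_self n),
      min_eq_right (Nat.le_succ n), hb]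
  have hψ0 : ψ 0 = H a * g a := by
    rw [hψ]
    show H (uext a b n ξ 0) * g (t (min 0 n)) = H a * g a
    rw [show uext a b n ξ 0 = a from if_pos rfl, Nat.zero_min, h0]
  rw [hψ1, hψ0] at hsum
  linarith [hsum]

end Abel
section PerB

theorem uext_zero (a b : ℝ) (n : ℕ) (ξ : ℕ → ℝ) : uext a b n ξ 0 = a := if_pos rfl

theorem uext_succ_of_lt (a b : ℝ) {n j : ℕ} (ξ : ℕ → ℝ) (h : j < n) :
    uext a b n ξ (j + 1) = ξ j := by
  rw [uext, if_neg (Nat.succ_ne_zero j), if_pos (by omega : j + 1 ≤ n)]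
  congr 1

theorem uext_top (a b : ℝ) (n : ℕ) (ξ : ℕ → ℝ) : uext a b n ξ (n + 1) = b := by
  rw [uext, if_neg (Nat.succ_ne_zero n), if_neg (Nat.not_succ_le_self n)]

theorem isRSIntegral_darboux {a b : ℝ} (hab : a < b) {g H : ℝ → ℝ}
    (hH : MonotoneOn H (Set.Icc a b)) (hg : ContinuousOn g (Set.Icc a b)) :
    IsRSIntegral H g a b (H b * g b - H a * g a - J g H a b) := by
  intro ε hε
  have hgA : BddAbove (g '' Set.Icc a b) := (isCompact_Icc.image_of_continuousOn hg).bddAbove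
  have hgB : BddBelow (g '' Set.Icc a b) := (isCompact_Icc.image_of_continuousOn hg).bddBelow
  have hHab : H a ≤ H b := hH (Set.left_mem_Icc.mpr hab.le) (Set.right_mem_Icc.mpr hab.le) hab.le
  set ω := ε / (H b - H a + 1) with hωdef
  have hωpos : 0 < ω := div_pos hε (by linarith)
  have hωε : ω * (H b - H a) < ε := by
    have h1 : ω * (H b - H a + 1) = ε := div_mul_cancel₀ ε (by linarith)
    nlinarith
  have huc : UniformContinuousOn g (Set.Icc a b) :=
    isCompact_Icc.uniformContinuousOn_of_continuous hg
  rw [Metric.uniformContinuousOn_iff] at huc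
  obtain ⟨δ', hδ'pos, hδ'⟩ := huc ω hωpos
  refine ⟨δ' / 3, by positivity, ?_⟩
  intro n t ξ h0 hbn hmono hξ hmesh
  have hn : 1 ≤ n := by
    rcases Nat.eq_zero_or_pos n with rfl | h
    · exact absurd (h0 ▸ hbn) (ne_of_lt hab)
    · exact h
  have hP : IsPart a b n t := ⟨h0, hbn, hmono⟩
  set u := uext a b n ξ with hu
  set τ : ℕ → ℝ := fun j => t (min j n) with hτdef
  -- the dual partition
  have hP' : IsPart a b (n + 1) u := by
    refine ⟨uext_zero a b n ξ, uext_top a b n ξ, fun j hj => ?_⟩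
    match j, hj with
    | 0, _ =>
      rw [hu, uext_zero, uext_succ_of_lt a b ξ hn]
      exact h0 ▸ (hξ 0 hn).1
    | (k + 1), hj =>
      have hk : k < n := by omega
      rw [hu, uext_succ_of_lt a b ξ hk]
      rcases Nat.lt_or_ge (k + 1) n with h2 | h2
      · rw [uext_succ_of_lt a b ξ h2]
        exact le_trans (hξ k hk).2 (hξ (k + 1) h2).1
      · have : k + 1 = n := by omega
        rw [this, uext_top]
        exact le_trans (hξ k hk).2 (this ▸ hbn ▸ le_rfl)
  have hτmem : ∀ j < n + 1, τ j ∈ Set.Icc (u j) (u (j + 1)) := by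
    intro j hj
    match j, hj with
    | 0, _ =>
      simp only [hτdef, hu, Nat.zero_min]
      rw [uext_zero, uext_succ_of_lt a b ξ hn]
      exact ⟨h0.ge, h0 ▸ (hξ 0 hn).1⟩
    | (k + 1), hj =>
      have hk : k < n := by omega
      simp only [hτdef, hu]
      rw [uext_succ_of_lt a b ξ hk]
      rcases Nat.lt_or_ge (k + 1) n with h2 | h2
      · rw [uext_succ_of_lt a b ξ h2, min_eq_left (by omega : k + 1 ≤ n)]
        exact ⟨(hξ k hk).2, (hξ (k + 1) h2).1⟩
      · have he : k + 1 = n := by omega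
        rw [he, uext_top, min_self]
        exact ⟨he ▸ (hξ k hk).2, le_of_eq hbn⟩
  have hmesh' : ∀ j < n + 1, u (j + 1) - u j ≤ 2 * (δ' / 3) := by
    intro j hj
    match j, hj with
    | 0, _ =>
      rw [hu, uext_zero, uext_succ_of_lt a b ξ hn]
      have := hmesh 0 hn
      have h1 : ξ 0 ≤ t 1 := (hξ 0 hn).2
      have h2 : t 0 = a := h0
      linarith
    | (k + 1), hj =>
      have hk : k < n := by omega
      rw [hu, uext_succ_of_lt a b ξ hk]
      rcases Nat.lt_or_ge (k + 1) n with h2 | h2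
      · rw [uext_succ_of_lt a b ξ h2]
        have m1 := hmesh k hk
        have m2 := hmesh (k + 1) h2
        have h3 : t k ≤ ξ k := (hξ k hk).1
        have h4 : ξ (k + 1) ≤ t (k + 2) := (hξ (k + 1) h2).2
        linarith
      · have he : k + 1 = n := by omega
        rw [he, uext_top]
        have m1 := hmesh k hk
        have h3 : t k ≤ ξ k := (hξ k hk).1
        have h4 : b = t (k + 1) := he ▸ hbn.symm
        linarith
  set T : ℝ := ∑ j ∈ Finset.range (n + 1), g (τ j) * (H (u (j + 1)) - H (u j)) with hT
  have hlowT : lowSum g H (n + 1) u ≤ T := lowSum_le_tagged hH hgB hP' hτmem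
  have hTup : T ≤ upSum g H (n + 1) u := tagged_le_upSum hH hgA hP' hτmem
  have hlowJ : lowSum g H (n + 1) u ≤ J g H a b := lowSum_le_J hab.le hH hgA hgB hP'
  have hJup : J g H a b ≤ upSum g H (n + 1) u := J_le_upSum hab.le hH hgA hgB hP'
  have hosc : ∀ x ∈ Set.Icc a b, ∀ y ∈ Set.Icc a b, |x - y| ≤ 2 * (δ' / 3) → |g x - g y| ≤ ω := by
    intro x hx y hy hxy
    have := hδ' x hx y hy (by rw [Real.dist_eq]; linarith)
    rw [Real.dist_eq] at this
    exact this.le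
  have hupdiff : upSum g H (n + 1) u - lowSum g H (n + 1) u ≤ ω * (H b - H a) :=
    upSum_sub_lowSum_le hωpos.le hH hosc hP' hmesh'
  have hid : rsSum H g n t ξ - (H b * g b - H a * g a - J g H a b) = J g H a b - T := by
    rw [abel_identity H g hn t ξ h0 hbn]
    rw [hT, hτdef, hu]
    ring
  rw [hid]
  have habs : |J g H a b - T| ≤ ω * (H b - H a) :=
    abs_sub_le_iff.mpr ⟨by linarith, by linarith⟩
  exact lt_of_le_of_lt habs hωε

end PerB
section JIncr

variable {g H : ℝ → ℝ} {a b₁ b₂ : ℝ}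

theorem le_J_incr (h1 : a ≤ b₁) (h12 : b₁ ≤ b₂)
    (hH : MonotoneOn H (Set.Icc a b₂))
    (hgA : BddAbove (g '' Set.Icc a b₂)) (hgB : BddBelow (g '' Set.Icc a b₂)) :
    J g H a b₁ + sInf (g '' Set.Icc b₁ b₂) * (H b₂ - H b₁) ≤ J g H a b₂ := by
  rw [← le_sub_iff_add_le]
  have hH₁ : MonotoneOn H (Set.Icc a b₁) := hH.mono (Set.Icc_subset_Icc_right h12)
  have hgA₁ : BddAbove (g '' Set.Icc a b₁) :=
    hgA.mono (Set.image_mono (f := g) (Set.Icc_subset_Icc_right h12))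
  have hgB₁ : BddBelow (g '' Set.Icc a b₁) :=
    hgB.mono (Set.image_mono (f := g) (Set.Icc_subset_Icc_right h12))
  refine csSup_le (dLow_nonempty h1) ?_
  rintro L ⟨n, t, hP, rfl⟩
  rw [le_sub_iff_add_le]
  set t' : ℕ → ℝ := fun i => if i ≤ n then t i else b₂ with ht'
  have ht'eq : ∀ i ≤ n, t' i = t i := fun i hi => if_pos hi
  have hP' : IsPart a b₂ (n + 1) t' := by
    refine ⟨(ht'eq 0 (Nat.zero_le n)).trans hP.1, if_neg (Nat.not_succ_le_self n), fun i hi => ?_⟩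
    rcases Nat.lt_or_ge i n with h | h
    · rw [ht'eq i h.le, ht'eq (i + 1) h]
      exact hP.2.2 i h
    · have : i = n := by omega
      subst this
      simp only [ht']
      rw [if_pos le_rfl, if_neg (Nat.not_succ_le_self i), hP.2.1]
      exact h12
  have hsplit : lowSum g H (n + 1) t' = lowSum g H n t
      + sInf (g '' Set.Icc b₁ b₂) * (H b₂ - H b₁) := by
    rw [lowSum, Finset.sum_range_succ]
    congr 1
    · refine Finset.sum_congr rfl fun i hi => ?_
      rw [Finset.mem_range] at hi
      rw [ht'eq i hi.le, ht'eq (i + 1) hi]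
    · simp only [ht']
      rw [if_pos le_rfl, if_neg (Nat.not_succ_le_self n), hP.2.1]
  rw [← hsplit]
  exact lowSum_le_J (le_trans h1 h12) hH hgA hgB hP'

theorem J_incr_le (h1 : a ≤ b₁) (h12 : b₁ ≤ b₂)
    (hH : MonotoneOn H (Set.Icc a b₂))
    (hgA : BddAbove (g '' Set.Icc a b₂)) (hgB : BddBelow (g '' Set.Icc a b₂)) :
    J g H a b₂ ≤ J g H a b₁ + sSup (g '' Set.Icc b₁ b₂) * (H b₂ - H b₁) := by
  have hH₁ : MonotoneOn H (Set.Icc a b₁) := hH.mono (Set.Icc_subset_Icc_right h12)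
  have hgA₁ : BddAbove (g '' Set.Icc a b₁) :=
    hgA.mono (Set.image_mono (f := g) (Set.Icc_subset_Icc_right h12))
  have hgB₁ : BddBelow (g '' Set.Icc a b₁) :=
    hgB.mono (Set.image_mono (f := g) (Set.Icc_subset_Icc_right h12))
  refine csSup_le (dLow_nonempty (le_trans h1 h12)) ?_
  rintro L ⟨n, t, hP, rfl⟩
  set Δ₁ : ℕ → ℝ := fun i => H (min (t (i + 1)) b₁) - H (min (t i) b₁) with hΔ₁
  set Δ₂ : ℕ → ℝ := fun i => H (max (t (i + 1)) b₁) - H (max (t i) b₁) with hΔ₂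
  have hminmem : ∀ i ≤ n, min (t i) b₁ ∈ Set.Icc a b₂ :=
    fun i hi => ⟨le_min (hP.left_le hi) h1, le_trans (min_le_left _ _) (hP.le_right hi)⟩
  have hmaxmem : ∀ i ≤ n, max (t i) b₁ ∈ Set.Icc a b₂ :=
    fun i hi => ⟨le_trans h1 (le_max_right _ _), max_le (hP.le_right hi) h12⟩
  have hΔ₁nn : ∀ i < n, 0 ≤ Δ₁ i := fun i hi => sub_nonneg.mpr
    (hH (hminmem i hi.le) (hminmem (i + 1) hi) (min_le_min (hP.2.2 i hi) le_rfl))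
  have hΔ₂nn : ∀ i < n, 0 ≤ Δ₂ i := fun i hi => sub_nonneg.mpr
    (hH (hmaxmem i hi.le) (hmaxmem (i + 1) hi) (max_le_max (hP.2.2 i hi) le_rfl))
  have hsplit : ∀ i < n, H (t (i + 1)) - H (t i) = Δ₁ i + Δ₂ i := by
    intro i hi
    have key : ∀ x, H (min x b₁) + H (max x b₁) = H x + H b₁ := by
      intro x
      rcases le_total x b₁ with h | h
      · rw [min_eq_left h, max_eq_right h]
      · rw [min_eq_right h, max_eq_left h]; ring
    have k1 := key (t (i + 1))
    have k2 := key (t i)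
    rw [hΔ₁, hΔ₂]
    simp only
    linarith
  have hdecomp : lowSum g H n t
      = (∑ i ∈ Finset.range n, sInf (g '' Set.Icc (t i) (t (i + 1))) * Δ₁ i)
      + (∑ i ∈ Finset.range n, sInf (g '' Set.Icc (t i) (t (i + 1))) * Δ₂ i) := by
    rw [lowSum, ← Finset.sum_add_distrib]
    refine Finset.sum_congr rfl fun i hi => ?_
    rw [Finset.mem_range] at hi
    rw [hsplit i hi, mul_add]
  -- part A : clamped partition
  set s : ℕ → ℝ := fun i => min (t i) b₁ with hs
  have hQ : IsPart a b₁ n s := by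
    refine ⟨?_, ?_, fun i hi => min_le_min (hP.2.2 i hi) le_rfl⟩
    · rw [hs]; simp only; rw [hP.1, min_eq_left h1]
    · rw [hs]; simp only; rw [hP.2.1, min_eq_right h12]
  have hA : ∑ i ∈ Finset.range n, sInf (g '' Set.Icc (t i) (t (i + 1))) * Δ₁ i
      ≤ lowSum g H n s := by
    refine Finset.sum_le_sum fun i hi => ?_
    rw [Finset.mem_range] at hi
    rcases le_total (t i) b₁ with h | h
    · have hsub : Set.Icc (s i) (s (i + 1)) ⊆ Set.Icc (t i) (t (i + 1)) := by
        refine Set.Icc_subset_Icc (le_of_eq ?_) (min_le_left _ _)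
        rw [hs]; simp only; rw [min_eq_left h]
      have hne : (Set.Icc (s i) (s (i + 1))).Nonempty :=
        Set.nonempty_Icc.mpr (min_le_min (hP.2.2 i hi) le_rfl)
      have hle : sInf (g '' Set.Icc (t i) (t (i + 1))) ≤ sInf (g '' Set.Icc (s i) (s (i + 1))) := by
        refine csInf_le_csInf ?_ (hne.image g) (Set.image_mono (f := g) hsub)
        exact hgB.mono (Set.image_mono (f := g) (Set.Icc_subset_Icc (hP.left_le hi.le) (hP.le_right hi)))
      have : Δ₁ i = H (s (i + 1)) - H (s i) := rfl
      rw [this]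
      exact mul_le_mul_of_nonneg_right hle (hΔ₁nn i hi)
    · have e1 : min (t i) b₁ = b₁ := min_eq_right h
      have e2 : min (t (i + 1)) b₁ = b₁ := min_eq_right (le_trans h (hP.2.2 i hi))
      have hz : Δ₁ i = 0 := by rw [hΔ₁]; simp only; rw [e1, e2, sub_self]
      have hz' : H (s (i + 1)) - H (s i) = 0 := by
        rw [hs]; simp only; rw [e1, e2, sub_self]
      rw [hz, hz', mul_zero, mul_zero]
  have hAJ : lowSum g H n s ≤ J g H a b₁ := lowSum_le_J h1 hH₁ hgA₁ hgB₁ hQ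
  -- part B
  have hB : ∑ i ∈ Finset.range n, sInf (g '' Set.Icc (t i) (t (i + 1))) * Δ₂ i
      ≤ sSup (g '' Set.Icc b₁ b₂) * (H b₂ - H b₁) := by
    have hterm : ∀ i ∈ Finset.range n, sInf (g '' Set.Icc (t i) (t (i + 1))) * Δ₂ i
        ≤ sSup (g '' Set.Icc b₁ b₂) * Δ₂ i := by
      intro i hi
      rw [Finset.mem_range] at hi
      rcases eq_or_ne (Δ₂ i) 0 with h0 | h0
      · rw [h0, mul_zero, mul_zero]
      · have hne : max (t i) b₁ ≠ max (t (i + 1)) b₁ := by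
          intro hc
          exact h0 (by rw [hΔ₂]; simp only; rw [hc, sub_self])
        have hlt : b₁ < t (i + 1) := by
          by_contra hc
          push_neg at hc
          exact hne (by rw [max_eq_right (le_trans (hP.2.2 i hi) hc), max_eq_right hc])
        set z := max (t i) b₁ with hzdef
        have hz1 : z ∈ Set.Icc (t i) (t (i + 1)) :=
          ⟨le_max_left _ _, max_le (hP.2.2 i hi) hlt.le⟩
        have hz2 : z ∈ Set.Icc b₁ b₂ := ⟨le_max_right _ _, max_le (hP.le_right hi.le) h12⟩
        have l1 : sInf (g '' Set.Icc (t i) (t (i + 1))) ≤ g z := by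
          refine csInf_le ?_ (Set.mem_image_of_mem g hz1)
          exact hgB.mono (Set.image_mono (f := g) (Set.Icc_subset_Icc (hP.left_le hi.le) (hP.le_right hi)))
        have l2 : g z ≤ sSup (g '' Set.Icc b₁ b₂) := by
          refine le_csSup ?_ (Set.mem_image_of_mem g hz2)
          exact hgA.mono (Set.image_mono (f := g) (Set.Icc_subset_Icc h1 le_rfl))
        exact mul_le_mul_of_nonneg_right (le_trans l1 l2) (hΔ₂nn i hi)
    refine le_trans (Finset.sum_le_sum hterm) ?_
    rw [← Finset.mul_sum]
    have : ∑ i ∈ Finset.range n, Δ₂ i = H b₂ - H b₁ := by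
      rw [hΔ₂]
      rw [Finset.sum_range_sub (fun i => H (max (t i) b₁)), hP.1, hP.2.1,
        max_eq_left h12, max_eq_right h1]
    rw [this]
  rw [hdecomp]
  linarith
end JIncr
section Improper

theorem exists_fine_partition {a b δ : ℝ} (hab : a < b) (hδ : 0 < δ) :
    ∃ (n : ℕ) (t : ℕ → ℝ), IsPart a b n t ∧ (∀ i < n, t (i + 1) - t i < δ) := by
  obtain ⟨n, hn⟩ := exists_nat_gt ((b - a) / δ)
  have hpos : 0 < (b - a) / δ := div_pos (by linarith) hδ
  have hn0 : 0 < n := by exact_mod_cast lt_trans hpos hn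
  have hn0' : (n : ℝ) ≠ 0 := by positivity
  have hstep : (b - a) / n < δ := by
    rw [div_lt_iff₀ (by positivity)]
    rw [div_lt_iff₀ hδ] at hn
    linarith
  refine ⟨n, fun i => a + (min i n : ℕ) * ((b - a) / n), ⟨?_, ?_, ?_⟩, ?_⟩
  · simp
  · simp only [min_self]
    field_simp
    ring
  · intro i hi
    have e1 : min i n = i := min_eq_left hi.le
    have e2 : min (i + 1) n = i + 1 := min_eq_left hi
    simp only
    rw [e1, e2]
    have : (0:ℝ) ≤ (b - a) / n := div_nonneg (by linarith) (by positivity)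
    push_cast
    nlinarith
  · intro i hi
    have e1 : min i n = i := min_eq_left hi.le
    have e2 : min (i + 1) n = i + 1 := min_eq_left hi
    simp only
    rw [e1, e2]
    push_cast
    have : ((i:ℝ) + 1) * ((b - a) / n) - i * ((b - a) / n) = (b - a) / n := by ring
    linarith [hstep]

theorem isRSIntegral_unique {f g : ℝ → ℝ} {a b I I' : ℝ} (hab : a < b)
    (h : IsRSIntegral f g a b I) (h' : IsRSIntegral f g a b I') : I = I' := by
  by_contra hne
  have hε : 0 < |I - I'| / 2 := by
    have : I - I' ≠ 0 := sub_ne_zero.mpr hne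
    positivity
  obtain ⟨δ, hδpos, hδ⟩ := h (|I - I'| / 2) hε
  obtain ⟨δ', hδ'pos, hδ'⟩ := h' (|I - I'| / 2) hε
  obtain ⟨n, t, hP, hmesh⟩ := exists_fine_partition hab (lt_min hδpos hδ'pos)
  have hξ : ∀ i < n, t i ∈ Set.Icc (t i) (t (i + 1)) := fun i hi => ⟨le_rfl, hP.2.2 i hi⟩
  have h1 := hδ n t t hP.1 hP.2.1 hP.2.2 hξ
    (fun i hi => lt_of_lt_of_le (hmesh i hi) (min_le_left _ _))
  have h2 := hδ' n t t hP.1 hP.2.1 hP.2.2 hξ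
    (fun i hi => lt_of_lt_of_le (hmesh i hi) (min_le_right _ _))
  have := abs_sub_lt_iff.mp h1
  have := abs_sub_lt_iff.mp h2
  have htri : |I - I'| ≤ |rsSum f g n t t - I| + |rsSum f g n t t - I'| := by
    rw [abs_sub_comm (rsSum f g n t t) I]
    exact abs_sub_le I (rsSum f g n t t) I'
  linarith

theorem isImproperRSIntegral_unique {f g : ℝ → ℝ} {a I I' : ℝ}
    (h : IsImproperRSIntegral f g a I) (h' : IsImproperRSIntegral f g a I') : I = I' := by
  obtain ⟨F, hF, hFlim⟩ := h
  obtain ⟨F', hF', hF'lim⟩ := h'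
  have heq : ∀ᶠ b in atTop, F' b = F b := by
    rw [eventually_atTop]
    exact ⟨a + 1, fun b hb =>
      isRSIntegral_unique (by linarith) (hF' b (by linarith)) (hF b (by linarith))⟩
  exact tendsto_nhds_unique hFlim (Filter.Tendsto.congr' heq hF'lim)

/-- Existence of the improper RS integral, with the limit value of the explicit formula. -/
theorem exists_improper {a : ℝ} {H G : ℝ → ℝ} (hH_mono : MonotoneOn H (Set.Ici a))
    {M : ℝ} (hM : ∀ x ∈ Set.Ici a, |H x| ≤ M)
    (hG_cont : ContinuousOn G (Set.Ici a)) (hG_lim : Tendsto G atTop (nhds 0)) :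
    ∃ I, IsImproperRSIntegral H (fun x => -G x) a I ∧
      Tendsto (fun b => H b * (-G b) - H a * (-G a) - J (fun x => -G x) H a b)
        atTop (nhds I) := by
  set g : ℝ → ℝ := fun x => -G x with hg
  have hg_cont : ContinuousOn g (Set.Ici a) := hG_cont.neg
  set F : ℝ → ℝ := fun b => H b * g b - H a * g a - J g H a b with hF
  have hRS : ∀ b, a < b → IsRSIntegral H g a b (F b) := fun b hb =>
    isRSIntegral_darboux hb (hH_mono.mono (Set.Icc_subset_Ici_self))
      (hg_cont.mono (Set.Icc_subset_Ici_self))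
  have hM0 : 0 ≤ M := le_trans (abs_nonneg _) (hM a Set.self_mem_Ici)
  have key : ∀ ε > 0, ∃ B, a ≤ B ∧ ∀ p, B ≤ p → ∀ q, B ≤ q → |F p - F q| < ε := by
    intro ε hε
    set ε' : ℝ := ε / (4 * M + 1) with hε'def
    have hε'pos : 0 < ε' := by positivity
    have hsmall : 4 * M * ε' < ε := by
      rw [hε'def]
      rw [div_eq_iff (by positivity : (4:ℝ) * M + 1 ≠ 0)] at *
      nlinarith [div_pos hε (by positivity : (0:ℝ) < 4 * M + 1)]
    obtain ⟨B₀, hB₀⟩ := eventually_atTop.mp ((Metric.tendsto_nhds.mp hG_lim) ε' hε'pos)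
    refine ⟨max a B₀, le_max_left _ _, ?_⟩
    have main : ∀ p q, max a B₀ ≤ p → p ≤ q → |F p - F q| < ε := by
      intro p q hp hpq
      have hap : a ≤ p := le_trans (le_max_left _ _) hp
      have haq : a ≤ q := le_trans hap hpq
      have hHmono2 : MonotoneOn H (Set.Icc a q) := hH_mono.mono Set.Icc_subset_Ici_self
      have hgA : BddAbove (g '' Set.Icc a q) :=
        (isCompact_Icc.image_of_continuousOn (hg_cont.mono Set.Icc_subset_Ici_self)).bddAbove
      have hgB : BddBelow (g '' Set.Icc a q) :=
        (isCompact_Icc.image_of_continuousOn (hg_cont.mono Set.Icc_subset_Ici_self)).bddBelow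
      have hGsmall : ∀ x, p ≤ x → |G x| < ε' := by
        intro x hx
        have := hB₀ x (le_trans (le_max_right a B₀) (le_trans hp hx))
        rwa [Real.dist_eq, sub_zero] at this
      have hne : (Set.Icc p q).Nonempty := Set.nonempty_Icc.mpr hpq
      have hInf : -ε' ≤ sInf (g '' Set.Icc p q) := by
        refine le_csInf (hne.image g) ?_
        rintro y ⟨x, hx, rfl⟩
        have := hGsmall x hx.1
        rw [abs_lt] at this
        simp only [hg]
        linarith
      have hSup : sSup (g '' Set.Icc p q) ≤ ε' := by
        refine csSup_le (hne.image g) ?_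
        rintro y ⟨x, hx, rfl⟩
        have := hGsmall x hx.1
        rw [abs_lt] at this
        simp only [hg]
        linarith
      have hHd : 0 ≤ H q - H p ∧ H q - H p ≤ 2 * M := by
        constructor
        · exact sub_nonneg.mpr (hH_mono hap haq hpq)
        · have h1 := hM p hap
          have h2 := hM q haq
          rw [abs_le] at h1 h2
          linarith
      have hJ1 := le_J_incr hap hpq hHmono2 hgA hgB
      have hJ2 := J_incr_le hap hpq hHmono2 hgA hgB
      have hJd : |J g H a q - J g H a p| ≤ 2 * M * ε' := by
        rw [abs_le]
        constructor
        · nlinarith [mul_le_mul_of_nonneg_right hInf hHd.1]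
        · nlinarith [mul_le_mul_of_nonneg_right hSup hHd.1]
      have hb1 : |H p * g p| ≤ M * ε' := by
        rw [abs_mul]
        have e : |g p| = |G p| := by rw [hg]; simp [abs_neg]
        exact mul_le_mul (hM p hap) (e ▸ (hGsmall p le_rfl).le) (abs_nonneg _) hM0
      have hb2 : |H q * g q| ≤ M * ε' := by
        rw [abs_mul]
        have e : |g q| = |G q| := by rw [hg]; simp [abs_neg]
        exact mul_le_mul (hM q haq) (e ▸ (hGsmall q hpq).le) (abs_nonneg _) hM0
      have hFd : F p - F q = (H p * g p - H q * g q) - (J g H a p - J g H a q) := by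
        rw [hF]; ring
      rw [hFd]
      have := abs_le.mp hb1
      have := abs_le.mp hb2
      have := abs_le.mp hJd
      rw [abs_lt]
      constructor <;> nlinarith
    intro p hp q hq
    rcases le_total p q with h | h
    · exact main p q hp h
    · rw [abs_sub_comm]; exact main q p hq h
  have hcauchy : Cauchy (Filter.map F atTop) := by
    rw [Metric.cauchy_iff]
    refine ⟨Filter.map_neBot, fun ε hε => ?_⟩
    obtain ⟨B, _, hB⟩ := key ε hε
    refine ⟨F '' Set.Ici B, Filter.image_mem_map (Ici_mem_atTop B), ?_⟩
    rintro x ⟨p, hp, rfl⟩ y ⟨q, hq, rfl⟩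
    rw [Real.dist_eq]
    exact hB p hp q hq
  obtain ⟨I, hI⟩ := CompleteSpace.complete hcauchy
  exact ⟨I, ⟨F, hRS, hI⟩, hI⟩

end Improper
theorem J_mono {g₁ g₂ H : ℝ → ℝ} {a b : ℝ} (hab : a ≤ b)
    (hH : MonotoneOn H (Set.Icc a b))
    (hg₁A : BddAbove (g₁ '' Set.Icc a b)) (hg₁B : BddBelow (g₁ '' Set.Icc a b))
    (hg₂B : BddBelow (g₂ '' Set.Icc a b))
    (hle : ∀ x ∈ Set.Icc a b, g₂ x ≤ g₁ x) :
    J g₂ H a b ≤ J g₁ H a b := by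
  refine csSup_le (dLow_nonempty hab) ?_
  rintro L ⟨n, t, hP, rfl⟩
  refine le_trans ?_ (lowSum_le_J hab hH hg₁A hg₁B hP)
  refine Finset.sum_le_sum fun i hi => ?_
  rw [Finset.mem_range] at hi
  have hsub : Set.Icc (t i) (t (i + 1)) ⊆ Set.Icc a b :=
    Set.Icc_subset_Icc (hP.left_le hi.le) (hP.le_right hi)
  have hne : (Set.Icc (t i) (t (i + 1))).Nonempty := Set.nonempty_Icc.mpr (hP.2.2 i hi)
  have hΔ : 0 ≤ H (t (i + 1)) - H (t i) := sub_nonneg.mpr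
    (hH (hsub ⟨le_rfl, hP.2.2 i hi⟩) (hsub ⟨hP.2.2 i hi, le_rfl⟩) (hP.2.2 i hi))
  refine mul_le_mul_of_nonneg_right ?_ hΔ
  refine le_csInf (hne.image g₁) ?_
  rintro y ⟨x, hx, rfl⟩
  exact le_trans (csInf_le (hg₂B.mono (Set.image_mono hsub))
    (Set.mem_image_of_mem _ hx)) (hle x (hsub hx))

end RSAux

/-- If `a > 0`, `H` is non-decreasing, bounded and non-negative on
`[a,∞)`, and `G₁, G₂` are continuous, of bounded variation on `[a,∞)` and tend to `0`
at `∞`, then the improper Riemann–Stieltjes integrals `∫_a^∞ H(x) d[-Gᵢ(x)]` exist,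
and if `G₁ ≤ G₂` on `[a,∞)` then `∫_a^∞ H(x) d[-G₁(x)] ≤ ∫_a^∞ H(x) d[-G₂(x)]`. -/
theorem rs_improper_monotone_nondecreasing
    (a : ℝ) (ha : 0 < a)
    (H G₁ G₂ : ℝ → ℝ)
    (hH_mono : MonotoneOn H (Set.Ici a))
    (hH_bdd : ∃ M, ∀ x ∈ Set.Ici a, |H x| ≤ M)
    (hH_nonneg : ∀ x ∈ Set.Ici a, 0 ≤ H x)
    (hG₁_cont : ContinuousOn G₁ (Set.Ici a))
    (hG₁_bv : BoundedVariationOn G₁ (Set.Ici a))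
    (hG₂_cont : ContinuousOn G₂ (Set.Ici a))
    (hG₂_bv : BoundedVariationOn G₂ (Set.Ici a))
    (hG₁_lim : Filter.Tendsto G₁ Filter.atTop (nhds 0))
    (hG₂_lim : Filter.Tendsto G₂ Filter.atTop (nhds 0)) :
    (∃ I₁, IsImproperRSIntegral H (fun x => -G₁ x) a I₁) ∧
    (∃ I₂, IsImproperRSIntegral H (fun x => -G₂ x) a I₂) ∧
    ((∀ x ∈ Set.Ici a, G₁ x ≤ G₂ x) →
      ∀ I₁ I₂, IsImproperRSIntegral H (fun x => -G₁ x) a I₁ →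
        IsImproperRSIntegral H (fun x => -G₂ x) a I₂ → I₁ ≤ I₂) := by
  obtain ⟨M, hM⟩ := hH_bdd
  obtain ⟨I₁', h1, h1t⟩ := RSAux.exists_improper hH_mono hM hG₁_cont hG₁_lim
  obtain ⟨I₂', h2, h2t⟩ := RSAux.exists_improper hH_mono hM hG₂_cont hG₂_lim
  refine ⟨⟨I₁', h1⟩, ⟨I₂', h2⟩, fun hle I₁ I₂ hI₁ hI₂ => ?_⟩
  rw [RSAux.isImproperRSIntegral_unique hI₁ h1, RSAux.isImproperRSIntegral_unique hI₂ h2]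
  -- it remains to prove `I₁' ≤ I₂'`
  have hcomp : (fun b => H b * (-G₁ b) - H a * (-G₁ a) - RSAux.J (fun x => -G₁ x) H a b)
      ≤ᶠ[Filter.atTop]
      (fun b => (H b * (-G₂ b) - H a * (-G₂ a) - RSAux.J (fun x => -G₂ x) H a b)
        + M * (G₂ b - G₁ b)) := by
    rw [Filter.EventuallyLE, Filter.eventually_atTop]
    refine ⟨a, fun b hb => ?_⟩
    have hHmono' : MonotoneOn H (Set.Icc a b) := hH_mono.mono Set.Icc_subset_Ici_self
    have hg₁A : BddAbove ((fun x => -G₁ x) '' Set.Icc a b) :=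
      (isCompact_Icc.image_of_continuousOn
        ((hG₁_cont.neg).mono Set.Icc_subset_Ici_self)).bddAbove
    have hg₁B : BddBelow ((fun x => -G₁ x) '' Set.Icc a b) :=
      (isCompact_Icc.image_of_continuousOn
        ((hG₁_cont.neg).mono Set.Icc_subset_Ici_self)).bddBelow
    have hg₂B : BddBelow ((fun x => -G₂ x) '' Set.Icc a b) :=
      (isCompact_Icc.image_of_continuousOn
        ((hG₂_cont.neg).mono Set.Icc_subset_Ici_self)).bddBelow
    have hJ : RSAux.J (fun x => -G₂ x) H a b ≤ RSAux.J (fun x => -G₁ x) H a b :=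
      RSAux.J_mono hb hHmono' hg₁A hg₁B hg₂B
        (fun x hx => neg_le_neg (hle x (Set.Icc_subset_Ici_self hx)))
    have hWb : 0 ≤ G₂ b - G₁ b := sub_nonneg.mpr (hle b hb)
    have hWa : 0 ≤ G₂ a - G₁ a := sub_nonneg.mpr (hle a Set.self_mem_Ici)
    have hHa : 0 ≤ H a := hH_nonneg a Set.self_mem_Ici
    have hHb : H b ≤ M := le_trans (le_abs_self _) (hM b hb)
    have h1' : H b * (G₂ b - G₁ b) ≤ M * (G₂ b - G₁ b) :=
      mul_le_mul_of_nonneg_right hHb hWb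
    have h2' : 0 ≤ H a * (G₂ a - G₁ a) := mul_nonneg hHa hWa
    nlinarith [h1', h2', hJ]
  have hlim2 : Filter.Tendsto
      (fun b => (H b * (-G₂ b) - H a * (-G₂ a) - RSAux.J (fun x => -G₂ x) H a b)
        + M * (G₂ b - G₁ b)) Filter.atTop (nhds (I₂' + M * (0 - 0))) :=
    h2t.add (Filter.Tendsto.const_mul M (hG₂_lim.sub hG₁_lim))
  have he : I₂' + M * (0 - 0) = I₂' := by ring
  rw [he] at hlim2
  exact le_of_tendsto_of_tendsto h1t hlim2 hcomp
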